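/- Let μ̃₁ = π̃∘σ̃⁻¹ and μ̃₂ = π̃∘τ⁻¹∘σ̃⁻¹ be the two matching permutations of the criss-cross cycle. If N is odd, then μ̃₁ and μ̃₂ each have exactly one fixed point (so each consists of (N−1)/2 transpositions and one fixed point). If N is even, then μ̃₁ has no fixed points and μ̃₂ has exactly two fixed points. -/

import Mathlib

/-- The criss-cross permutation σ̃ of {1,…,N}, written 0-indexed: position `i`
(1-indexed `i+1`) is sent to `2*i` when `2*i < N` (1-indexed: `σ̃(j)=2j-1` for
`j ≤ (N+1)/2`) and to `2*(N-1-i)+1` otherwise (1-indexed: `σ̃(j)=2N-2j+2` for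
`j > (N+1)/2`). -/
noncomputable def sigmaTilde (N : ℕ) : Equiv.Perm (Fin N) :=
  Equiv.ofBijective
    (fun i => if h : 2 * i.val < N then ⟨2 * i.val, h⟩
      else ⟨2 * (N - 1 - i.val) + 1, by have := i.isLt; omega⟩)
    (Finite.injective_iff_bijective.mp (by
      intro a b hab
      have ha := a.isLt; have hb := b.isLt
      by_cases h1 : 2 * a.val < N <;> by_cases h2 : 2 * b.val < N <;>
        simp only [h1, h2, dif_pos, dif_neg, not_false_iff, Fin.mk.injEq, Fin.ext_iff] at hab ⊢ <;>
        omega))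

/-- The criss-cross permutation π̃ = σ̃ ∘ I, where `I = Fin.revPerm` is the inversion
`I(j) = N+1-j` (0-indexed: `i ↦ N-1-i`).  Here `(f * g) i = f (g i)`. -/
noncomputable def piTilde (N : ℕ) : Equiv.Perm (Fin N) := sigmaTilde N * Fin.revPerm

/-- **Fixed points of the two criss-cross matchings.**  Let `μ̃₁ = π̃∘σ̃⁻¹` and
`μ̃₂ = π̃∘τ⁻¹∘σ̃⁻¹` (with `τ = finRotate N` the left rotation).  If `N` is odd, then
`μ̃₁` and `μ̃₂` each have exactly one fixed point (so, being involutions, each consists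
of `(N−1)/2` transpositions and one fixed point).  If `N` is even, then `μ̃₁` has no
fixed points and `μ̃₂` has exactly two. -/
lemma fixcard (N : ℕ) (f g : Equiv.Perm (Fin N)) :
    (Finset.univ.filter fun j : Fin N => (f * g⁻¹) j = j).card
      = (Finset.univ.filter fun i : Fin N => f i = g i).card := by
  apply Finset.card_bij' (fun j _ => g⁻¹ j) (fun i _ => g i)
  · intro j hj
    rw [Finset.mem_filter] at hj ⊢
    simp only [Finset.mem_filter, Finset.mem_univ, true_and,
      Equiv.Perm.mul_apply] at hj ⊢
    rw [hj]; simp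
  · intro i hi
    rw [Finset.mem_filter] at hi ⊢
    simp only [Finset.mem_filter, Finset.mem_univ, true_and,
      Equiv.Perm.mul_apply] at hi ⊢
    simp [hi]
  · intro j _; simp
  · intro i _; simp

theorem crisscross_matchings_fixed_points (N : ℕ) (hN : 1 ≤ N) :
    (Odd N →
      (Finset.univ.filter fun i : Fin N => (piTilde N * (sigmaTilde N)⁻¹) i = i).card = 1 ∧
      (Finset.univ.filter fun i : Fin N =>
        (piTilde N * (finRotate N)⁻¹ * (sigmaTilde N)⁻¹) i = i).card = 1) ∧
    (Even N →
      (Finset.univ.filter fun i : Fin N => (piTilde N * (sigmaTilde N)⁻¹) i = i).card = 0 ∧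
      (Finset.univ.filter fun i : Fin N =>
        (piTilde N * (finRotate N)⁻¹ * (sigmaTilde N)⁻¹) i = i).card = 2) := by
  obtain ⟨n, rfl⟩ : ∃ n, N = n + 1 := ⟨N - 1, by omega⟩
  set N := n + 1
  have hmu2 : piTilde N * (finRotate N)⁻¹ * (sigmaTilde N)⁻¹
      = piTilde N * (sigmaTilde N * finRotate N)⁻¹ := by
    rw [mul_inv_rev, mul_assoc]
  have hc1 : (Finset.univ.filter fun i : Fin N =>
      (piTilde N * (sigmaTilde N)⁻¹) i = i).card
      = (Finset.univ.filter fun i : Fin N => N - (i.val + 1) = i.val).card := by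
    rw [fixcard]
    congr 1; ext i
    simp only [Finset.mem_filter, Finset.mem_univ, true_and, piTilde,
      Equiv.Perm.mul_apply, Fin.revPerm_apply]
    rw [(sigmaTilde N).injective.eq_iff, Fin.ext_iff, Fin.val_rev]
  have hc2 : (Finset.univ.filter fun i : Fin N =>
      (piTilde N * (finRotate N)⁻¹ * (sigmaTilde N)⁻¹) i = i).card
      = (Finset.univ.filter fun i : Fin N =>
          N - (i.val + 1) = (i.val + 1) % N).card := by
    rw [hmu2, fixcard]
    congr 1; ext i
    simp only [Finset.mem_filter, Finset.mem_univ, true_and, piTilde,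
      Equiv.Perm.mul_apply, Fin.revPerm_apply]
    rw [(sigmaTilde N).injective.eq_iff, Fin.ext_iff, Fin.val_rev,
      finRotate_succ_apply, Fin.val_add_one]
    by_cases h : i = Fin.last n
    · simp [h, Fin.val_last, Nat.mod_self, N]
    · have hi : i.val ≠ n := fun hh => h (by ext; simpa using hh)
      have := i.isLt
      rw [if_neg h, Nat.mod_eq_of_lt (by omega)]
  refine ⟨fun ho => ?_, fun he => ?_⟩
  · obtain ⟨k, hk⟩ := ho
    constructor
    · rw [hc1]
      rw [show (Finset.univ.filter fun i : Fin N => N - (i.val + 1) = i.val)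
          = {⟨k, by omega⟩} from ?_]
      · simp
      · ext i; simp only [Finset.mem_filter, Finset.mem_univ, true_and,
          Finset.mem_singleton, Fin.ext_iff]
        omega
    · rw [hc2]
      rw [show (Finset.univ.filter fun i : Fin N => N - (i.val + 1) = (i.val + 1) % N)
          = {⟨n, by omega⟩} from ?_]
      · simp
      · ext i; simp only [Finset.mem_filter, Finset.mem_univ, true_and,
          Finset.mem_singleton, Fin.ext_iff]
        have := i.isLt
        by_cases h : i.val = n
        · simp [h, Nat.mod_self, N]
        · rw [Nat.mod_eq_of_lt (by omega)]; omega
  · obtain ⟨k, hk⟩ := he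
    constructor
    · rw [hc1]
      rw [show (Finset.univ.filter fun i : Fin N => N - (i.val + 1) = i.val)
          = ∅ from ?_]
      · simp
      · ext i; simp only [Finset.mem_filter, Finset.mem_univ, true_and,
          Finset.notMem_empty, iff_false]
        omega
    · rw [hc2]
      have hk1 : 1 ≤ k := by omega
      rw [show (Finset.univ.filter fun i : Fin N => N - (i.val + 1) = (i.val + 1) % N)
          = {⟨k - 1, by omega⟩, ⟨n, by omega⟩} from ?_]
      · rw [Finset.card_insert_of_notMem (by simp [Fin.ext_iff]; omega)]
        simp
      · ext i; simp only [Finset.mem_filter, Finset.mem_univ, true_and,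
          Finset.mem_insert, Finset.mem_singleton, Fin.ext_iff]
        have := i.isLt
        by_cases h : i.val = n
        · simp [h, Nat.mod_self, N]
        · rw [Nat.mod_eq_of_lt (by omega)]; omega
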